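/- Let f : (0,∞)^k → (0,∞) be globally operator monotone. Then f is concave as a real function on (0,∞)^k, and hence continuous. -/

import Mathlib

open Matrix
open scoped ComplexOrder

/-- Square complex matrices of size `d`. -/
abbrev Mat (d : ℕ) := Matrix (Fin d) (Fin d) ℂ

/-- Loewner order: `A ≤ B` iff `B - A` is positive semi-definite. -/
def Loewner {d : ℕ} (A B : Mat d) : Prop := (B - A).PosSemidef

/-- The diagonal complex matrix with real entries `v`. -/
noncomputable def cDiag {d : ℕ} (v : Fin d → ℝ) : Mat d :=
  Matrix.diagonal (fun j => (v j : ℂ))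

/-- `JointDiag X U a` : the `k`-tuple `X` of matrices is jointly diagonalized by
the unitary `U` with (strictly positive) joint eigenvalue lists `a i`; this
encodes that `X` is a pairwise commuting `k`-tuple of positive invertible
operators together with a joint spectral decomposition `X i = Uᴴ (diag (a i)) U`. -/
def JointDiag {k d : ℕ} (X : Fin k → Mat d) (U : Mat d) (a : Fin k → Fin d → ℝ) : Prop :=
  U ∈ Matrix.unitaryGroup (Fin d) ℂ ∧ (∀ i j, 0 < a i j) ∧ ∀ i, X i = Uᴴ * cDiag (a i) * U

/-- The value `f(X)` of a real function `f : (0,∞)^k → ℝ` on the commuting tuple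
jointly diagonalized as `X i = Uᴴ (diag (a i)) U`, via joint functional calculus:
`f(X) = Uᴴ f(Λ) U`. -/
noncomputable def applyF {k d : ℕ} (f : (Fin k → ℝ) → ℝ) (U : Mat d)
    (a : Fin k → Fin d → ℝ) : Mat d :=
  Uᴴ * cDiag (fun j => f (fun i => a i j)) * U

/-- `f : (0,∞)^k → (0,∞)` is globally operator monotone: for all commuting
`k`-tuples `X ≤ Y` (coordinatewise Loewner order) of positive invertible
matrices, `f(X) ≤ f(Y)`, where `f` is applied through (any) joint spectral
decompositions. -/
def GloballyOpMonotone (k : ℕ) (f : (Fin k → ℝ) → ℝ) : Prop :=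
  (∀ x : Fin k → ℝ, (∀ i, 0 < x i) → 0 < f x) ∧
  ∀ (d : ℕ) (X Y : Fin k → Mat d) (U V : Mat d) (a b : Fin k → Fin d → ℝ),
    JointDiag X U a → JointDiag Y V b → (∀ i, Loewner (X i) (Y i)) →
    Loewner (applyF f U a) (applyF f V b)

/-! ### Auxiliary 2×2 matrix machinery -/

/-- The complex 2×2 matrix `!![p, q; q, r]` with real entries. -/
noncomputable def sym2 (p q r : ℝ) : Mat 2 := !![(p:ℂ), (q:ℂ); (q:ℂ), (r:ℂ)]

lemma sym2_eq_map (p q r : ℝ) :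
    sym2 p q r = (!![p, q; q, r]).map (Complex.ofRealHom : ℝ →+* ℂ) := by
  ext i j; fin_cases i <;> fin_cases j <;> simp [sym2]

lemma sym2_psd {p q r : ℝ} (hp : 0 ≤ p) (hr : 0 ≤ r) (h : q ^ 2 ≤ p * r) :
    (sym2 p q r).PosSemidef := by
  rcases eq_or_lt_of_le hp with hp0 | hp0
  · have hq : q = 0 := by nlinarith
    subst hq
    have : sym2 p 0 r = Matrix.diagonal ![(p:ℂ), (r:ℂ)] := by
      ext i j; fin_cases i <;> fin_cases j <;> simp [sym2, Matrix.diagonal]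
    rw [this]
    refine Matrix.posSemidef_diagonal_iff.mpr ?_
    intro i; fin_cases i <;> simp [Complex.zero_le_real, hp, hr]
  · have hd : 0 ≤ r - q ^ 2 / p := by
      rw [sub_nonneg, div_le_iff₀ hp0]; nlinarith
    obtain ⟨u, hu, hupos⟩ : ∃ u : ℝ, u * u = p ∧ 0 < u :=
      ⟨Real.sqrt p, Real.mul_self_sqrt hp, Real.sqrt_pos.mpr hp0⟩
    obtain ⟨v, hv⟩ : ∃ v : ℝ, v * v = r - q ^ 2 / p :=
      ⟨Real.sqrt _, Real.mul_self_sqrt hd⟩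
    have hune : u ≠ 0 := ne_of_gt hupos
    set Lr : Matrix (Fin 2) (Fin 2) ℝ := !![u, q / u; 0, v] with hLr
    have hvp : v * v * p = r * p - q ^ 2 := by
      rw [hv]; field_simp
    have hreal : Lrᵀ * Lr = !![p, q; q, r] := by
      ext i j
      fin_cases i <;> fin_cases j <;>
        simp [hLr, Matrix.mul_apply, Fin.sum_univ_two, Matrix.transpose_apply,
          Matrix.vecHead, Matrix.vecTail] <;>
      first
        | linear_combination hu
        | (field_simp; try linear_combination (v * v - r) * hu + hvp)
    have hmap : (Lr.map (Complex.ofRealHom : ℝ →+* ℂ))ᴴ * Lr.map Complex.ofRealHom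
        = sym2 p q r := by
      rw [sym2_eq_map, ← hreal, Matrix.map_mul]
      congr 1
      ext i j
      simp [Matrix.conjTranspose_apply, Matrix.map_apply, Matrix.transpose_apply,
        Complex.conj_ofReal]
    rw [← hmap]
    exact Matrix.posSemidef_conjTranspose_mul_self _

lemma sym2_sub (p q r p' q' r' : ℝ) :
    sym2 p q r - sym2 p' q' r' = sym2 (p - p') (q - q') (r - r') := by
  ext i j
  fin_cases i <;> fin_cases j <;> simp [sym2]

lemma psd00 {M : Mat 2} (h : M.PosSemidef) : 0 ≤ M 0 0 := by
  exact h.diag_nonneg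

/-- The rotation matrix `!![c, s; -s, c]`. -/
noncomputable def rotU (c s : ℝ) : Mat 2 := !![(c:ℂ), (s:ℂ); (-s:ℂ), (c:ℂ)]

lemma rotU_unitary {c s : ℝ} (h : c ^ 2 + s ^ 2 = 1) :
    rotU c s ∈ Matrix.unitaryGroup (Fin 2) ℂ := by
  rw [Matrix.mem_unitaryGroup_iff]
  have hC : ((c:ℂ)) ^ 2 + (s:ℂ) ^ 2 = 1 := by exact_mod_cast h
  ext i j
  fin_cases i <;> fin_cases j <;>
    simp [rotU, Matrix.mul_apply, Fin.sum_univ_two, Matrix.conjTranspose_apply,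
      Matrix.one_apply, Complex.conj_ofReal]
  all_goals ring_nf
  all_goals first | exact hC | (rw [add_comm]; exact hC)

lemma cDiag_pair (x y : ℝ) : cDiag ![x, y] = sym2 x 0 y := by
  ext i j
  fin_cases i <;> fin_cases j <;> simp [cDiag, sym2, Matrix.diagonal]

lemma rot_conj (c s : ℝ) (v : Fin 2 → ℝ) :
    (rotU c s)ᴴ * cDiag v * rotU c s =
      sym2 (c ^ 2 * v 0 + s ^ 2 * v 1) (c * s * (v 0 - v 1))
        (s ^ 2 * v 0 + c ^ 2 * v 1) := by
  ext i j
  fin_cases i <;> fin_cases j <;>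
    simp [rotU, cDiag, sym2, Matrix.mul_apply, Fin.sum_univ_two,
      Matrix.conjTranspose_apply, Matrix.diagonal, Complex.conj_ofReal] <;>
    push_cast <;> ring

lemma one_unitary {d : ℕ} : (1 : Mat d) ∈ Matrix.unitaryGroup (Fin d) ℂ := by
  rw [Matrix.mem_unitaryGroup_iff]; simp

-- extra helper lemmas to test, appended to skeleton minus key lemmas
lemma sym2_congr {p q r p' q' r' : ℝ} (h1 : p = p') (h2 : q = q') (h3 : r = r') :
    sym2 p q r = sym2 p' q' r' := by rw [h1, h2, h3]

lemma cDiag_two (w : Fin 2 → ℝ) : cDiag w = sym2 (w 0) 0 (w 1) := by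
  ext i j
  fin_cases i <;> fin_cases j <;> simp [cDiag, sym2, Matrix.diagonal]

lemma sym2_00 (p q r : ℝ) : sym2 p q r 0 0 = (p : ℂ) := by simp [sym2]

lemma sym2_entry00_nonneg {p q r : ℝ} (h : (sym2 p q r).PosSemidef) : 0 ≤ p := by
  have := psd00 h
  rw [sym2_00] at this
  exact_mod_cast this

/-- Key inequality I. -/
lemma key_le {k : ℕ} {f : (Fin k → ℝ) → ℝ} (hf : GloballyOpMonotone k f)
    {a b : Fin k → ℝ} (ha : ∀ i, 0 < a i) (hb : ∀ i, 0 < b i)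
    {t : ℝ} (ht0 : 0 < t) (ht1 : t < 1) {ε : ℝ} (hε : 0 < ε) :
    t * f a + (1 - t) * f b ≤ f (fun i => t * a i + (1 - t) * b i + ε) := by
  obtain ⟨c, hc2, hcpos⟩ : ∃ c : ℝ, c ^ 2 = t ∧ 0 < c :=
    ⟨Real.sqrt t, Real.sq_sqrt ht0.le, Real.sqrt_pos.mpr ht0⟩
  obtain ⟨s, hs2, hspos⟩ : ∃ s : ℝ, s ^ 2 = 1 - t ∧ 0 < s :=
    ⟨Real.sqrt (1 - t), Real.sq_sqrt (by linarith), Real.sqrt_pos.mpr (by linarith)⟩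
  have hcs2 : c ^ 2 + s ^ 2 = 1 := by rw [hc2, hs2]; ring
  -- the tuples of eigenvalue lists
  set A : Fin k → Fin 2 → ℝ := fun i => ![a i, b i] with hA
  set B : Fin k → Fin 2 → ℝ :=
    fun i => ![t * a i + (1 - t) * b i + ε,
      (1 - t) * a i + t * b i + (c * s * (a i - b i)) ^ 2 / ε] with hB
  set X : Fin k → Mat 2 := fun i => (rotU c s)ᴴ * cDiag (A i) * rotU c s with hX
  set Y : Fin k → Mat 2 := fun i => (1 : Mat 2)ᴴ * cDiag (B i) * 1 with hY
  have hXd : JointDiag X (rotU c s) A := by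
    refine ⟨rotU_unitary hcs2, fun i j => ?_, fun i => rfl⟩
    fin_cases j
    · simpa [hA] using ha i
    · simpa [hA] using hb i
  have hYd : JointDiag Y 1 B := by
    refine ⟨one_unitary, fun i j => ?_, fun i => rfl⟩
    have h1 : 0 < t * a i + (1 - t) * b i + ε := by nlinarith [ha i, hb i]
    have h2 : 0 < (1 - t) * a i + t * b i + (c * s * (a i - b i)) ^ 2 / ε := by
      have : 0 ≤ (c * s * (a i - b i)) ^ 2 / ε := by positivity
      nlinarith [ha i, hb i]
    fin_cases j
    · simpa [hB] using h1
    · simpa [hB] using h2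
  have hXi : ∀ i, X i = sym2 (t * a i + (1 - t) * b i) (c * s * (a i - b i))
      ((1 - t) * a i + t * b i) := by
    intro i
    rw [hX]
    show (rotU c s)ᴴ * cDiag (A i) * rotU c s = _
    rw [rot_conj]
    refine sym2_congr ?_ ?_ ?_ <;> simp [hA] <;>
      first
        | ring1
        | linear_combination (a i) * hc2 + (b i) * hs2
        | linear_combination (a i) * hs2 + (b i) * hc2
  have hYi : ∀ i, Y i = sym2 (t * a i + (1 - t) * b i + ε) 0
      ((1 - t) * a i + t * b i + (c * s * (a i - b i)) ^ 2 / ε) := by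
    intro i
    rw [hY]
    show (1 : Mat 2)ᴴ * cDiag (B i) * 1 = _
    rw [Matrix.conjTranspose_one, one_mul, mul_one, cDiag_two]
    refine sym2_congr ?_ ?_ ?_ <;> simp [hB]
  have hLoew : ∀ i, Loewner (X i) (Y i) := by
    intro i
    unfold Loewner
    rw [hXi i, hYi i, sym2_sub]
    have e1 : t * a i + (1 - t) * b i + ε - (t * a i + (1 - t) * b i) = ε := by ring
    have e2 : (1 - t) * a i + t * b i + (c * s * (a i - b i)) ^ 2 / ε
        - ((1 - t) * a i + t * b i) = (c * s * (a i - b i)) ^ 2 / ε := by ring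
    rw [sym2_congr e1 rfl e2]
    refine sym2_psd hε.le (by positivity) ?_
    exact le_of_eq (by rw [mul_div_cancel₀ _ (ne_of_gt hε)]; ring)
  have happ := hf.2 2 X Y (rotU c s) 1 A B hXd hYd hLoew
  unfold Loewner at happ
  have hFX : applyF f (rotU c s) A =
      sym2 (c ^ 2 * f a + s ^ 2 * f b) (c * s * (f a - f b))
        (s ^ 2 * f a + c ^ 2 * f b) := by
    unfold applyF
    rw [rot_conj]
    have e0 : (fun i => A i 0) = a := by funext i; simp [hA]
    have e1 : (fun i => A i 1) = b := by funext i; simp [hA]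
    refine sym2_congr ?_ ?_ ?_ <;> simp [e0, e1]
  have hFY : applyF f 1 B =
      sym2 (f (fun i => t * a i + (1 - t) * b i + ε)) 0
        (f (fun i => (1 - t) * a i + t * b i + (c * s * (a i - b i)) ^ 2 / ε)) := by
    unfold applyF
    rw [Matrix.conjTranspose_one, one_mul, mul_one, cDiag_two]
    refine sym2_congr ?_ ?_ ?_ <;> simp [hB]
  rw [hFX, hFY, sym2_sub] at happ
  have h00 := sym2_entry00_nonneg happ
  have e : c ^ 2 * f a + s ^ 2 * f b = t * f a + (1 - t) * f b := by
    rw [hc2, hs2]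
  linarith [h00, e.ge, e.le]

/-- Key inequality II. -/
lemma key_ge {k : ℕ} {f : (Fin k → ℝ) → ℝ} (hf : GloballyOpMonotone k f)
    {a b : Fin k → ℝ} (ha : ∀ i, 0 < a i) (hb : ∀ i, 0 < b i)
    {t : ℝ} (ht0 : 0 < t) (ht1 : t < 1) {ε : ℝ} (hε : 0 < ε)
    (h1 : ∀ i, ε < t * a i + (1 - t) * b i)
    (h2 : ∀ i, t * (1 - t) * (a i - b i) ^ 2 < ε * ((1 - t) * a i + t * b i)) :
    f (fun i => t * a i + (1 - t) * b i - ε) ≤ t * f a + (1 - t) * f b := by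
  obtain ⟨c, hc2, hcpos⟩ : ∃ c : ℝ, c ^ 2 = t ∧ 0 < c :=
    ⟨Real.sqrt t, Real.sq_sqrt ht0.le, Real.sqrt_pos.mpr ht0⟩
  obtain ⟨s, hs2, hspos⟩ : ∃ s : ℝ, s ^ 2 = 1 - t ∧ 0 < s :=
    ⟨Real.sqrt (1 - t), Real.sq_sqrt (by linarith), Real.sqrt_pos.mpr (by linarith)⟩
  have hcs2 : c ^ 2 + s ^ 2 = 1 := by rw [hc2, hs2]; ring
  have hr2 : ∀ i, (c * s * (a i - b i)) ^ 2 = t * (1 - t) * (a i - b i) ^ 2 := by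
    intro i; rw [mul_pow, mul_pow, hc2, hs2]
  set A : Fin k → Fin 2 → ℝ := fun i => ![a i, b i] with hA
  set B : Fin k → Fin 2 → ℝ :=
    fun i => ![t * a i + (1 - t) * b i - ε,
      (1 - t) * a i + t * b i - (c * s * (a i - b i)) ^ 2 / ε] with hB
  set X : Fin k → Mat 2 := fun i => (1 : Mat 2)ᴴ * cDiag (B i) * 1 with hX
  set Y : Fin k → Mat 2 := fun i => (rotU c s)ᴴ * cDiag (A i) * rotU c s with hY
  have hYd : JointDiag Y (rotU c s) A := by
    refine ⟨rotU_unitary hcs2, fun i j => ?_, fun i => rfl⟩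
    fin_cases j
    · simpa [hA] using ha i
    · simpa [hA] using hb i
  have hXd : JointDiag X 1 B := by
    refine ⟨one_unitary, fun i j => ?_, fun i => rfl⟩
    have hp1 : 0 < t * a i + (1 - t) * b i - ε := by have := h1 i; linarith
    have hp2 : 0 < (1 - t) * a i + t * b i - (c * s * (a i - b i)) ^ 2 / ε := by
      have := h2 i
      rw [sub_pos, hr2 i, div_lt_iff₀ hε]
      nlinarith [h2 i]
    fin_cases j
    · simpa [hB] using hp1
    · simpa [hB] using hp2
  have hYi : ∀ i, Y i = sym2 (t * a i + (1 - t) * b i) (c * s * (a i - b i))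
      ((1 - t) * a i + t * b i) := by
    intro i
    rw [hY]
    show (rotU c s)ᴴ * cDiag (A i) * rotU c s = _
    rw [rot_conj]
    refine sym2_congr ?_ ?_ ?_ <;> simp [hA] <;>
      first
        | ring1
        | linear_combination (a i) * hc2 + (b i) * hs2
        | linear_combination (a i) * hs2 + (b i) * hc2
  have hXi : ∀ i, X i = sym2 (t * a i + (1 - t) * b i - ε) 0
      ((1 - t) * a i + t * b i - (c * s * (a i - b i)) ^ 2 / ε) := by
    intro i
    rw [hX]
    show (1 : Mat 2)ᴴ * cDiag (B i) * 1 = _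
    rw [Matrix.conjTranspose_one, one_mul, mul_one, cDiag_two]
    refine sym2_congr ?_ ?_ ?_ <;> simp [hB]
  have hLoew : ∀ i, Loewner (X i) (Y i) := by
    intro i
    unfold Loewner
    rw [hXi i, hYi i, sym2_sub]
    have e1 : t * a i + (1 - t) * b i - (t * a i + (1 - t) * b i - ε) = ε := by ring
    have e2 : (1 - t) * a i + t * b i
        - ((1 - t) * a i + t * b i - (c * s * (a i - b i)) ^ 2 / ε)
        = (c * s * (a i - b i)) ^ 2 / ε := by ring
    have e3 : c * s * (a i - b i) - 0 = c * s * (a i - b i) := by ring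
    rw [sym2_congr e1 e3 e2]
    refine sym2_psd hε.le (by positivity) ?_
    exact le_of_eq (by rw [mul_div_cancel₀ _ (ne_of_gt hε)])
  have happ := hf.2 2 X Y 1 (rotU c s) B A hXd hYd hLoew
  unfold Loewner at happ
  have hFY : applyF f (rotU c s) A =
      sym2 (c ^ 2 * f a + s ^ 2 * f b) (c * s * (f a - f b))
        (s ^ 2 * f a + c ^ 2 * f b) := by
    unfold applyF
    rw [rot_conj]
    have e0 : (fun i => A i 0) = a := by funext i; simp [hA]
    have e1 : (fun i => A i 1) = b := by funext i; simp [hA]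
    refine sym2_congr ?_ ?_ ?_ <;> simp [e0, e1]
  have hFX : applyF f 1 B =
      sym2 (f (fun i => t * a i + (1 - t) * b i - ε)) 0
        (f (fun i => (1 - t) * a i + t * b i - (c * s * (a i - b i)) ^ 2 / ε)) := by
    unfold applyF
    rw [Matrix.conjTranspose_one, one_mul, mul_one, cDiag_two]
    refine sym2_congr ?_ ?_ ?_ <;> simp [hB]
  rw [hFX, hFY, sym2_sub] at happ
  have h00 := sym2_entry00_nonneg happ
  have e : c ^ 2 * f a + s ^ 2 * f b = t * f a + (1 - t) * f b := by
    rw [hc2, hs2]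
  linarith [h00, e.ge, e.le]

/-- Approximate right-continuity along the diagonal direction. -/
lemma right_cont {k : ℕ} {f : (Fin k → ℝ) → ℝ} (hf : GloballyOpMonotone k f)
    [Nonempty (Fin k)] {x : Fin k → ℝ} (hx : ∀ i, 0 < x i) {η : ℝ} (hη : 0 < η) :
    ∃ δ > 0, f (fun i => x i + δ) ≤ f x + η := by
  set μ : ℝ := Finset.univ.inf' Finset.univ_nonempty x with hμ
  have hμpos : 0 < μ := by
    rw [hμ, Finset.lt_inf'_iff]
    exact fun i _ => hx i
  have hμle : ∀ i, μ ≤ x i := fun i => Finset.inf'_le _ (Finset.mem_univ i)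
  set Δ : ℝ := μ / 2 with hΔ
  have hΔpos : 0 < Δ := by positivity
  set M : ℝ := |f (fun i => x i + Δ) - f x| with hM
  have hM0 : 0 ≤ M := abs_nonneg _
  set t : ℝ := min (1/2) (η / (M + 1)) with ht
  have ht0 : 0 < t := lt_min (by norm_num) (by positivity)
  have ht1 : t < 1 := lt_of_le_of_lt (min_le_left _ _) (by norm_num)
  set ε : ℝ := t * (1 - t) * Δ / 2 with hε
  have hεpos : 0 < ε := by
    have : 0 < 1 - t := by linarith
    positivity
  have hεΔ : ε < t * Δ := by nlinarith
  set a : Fin k → ℝ := fun i => x i + Δ with ha'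
  have ha : ∀ i, 0 < a i := fun i => by
    have := hx i; simp only [ha']; linarith
  have h1 : ∀ i, ε < t * a i + (1 - t) * x i := by
    intro i
    have := hx i
    simp only [ha']
    nlinarith
  have h2 : ∀ i, t * (1 - t) * (a i - x i) ^ 2 < ε * ((1 - t) * a i + t * x i) := by
    intro i
    have hxi := hμle i
    simp only [ha']
    have e1 : (x i + Δ - x i) ^ 2 = Δ ^ 2 := by ring
    rw [e1]
    have e2 : (1 - t) * (x i + Δ) + t * x i = x i + (1 - t) * Δ := by ring
    rw [e2]
    -- LHS = t(1-t)Δ² = ε · 2Δ · ... ; RHS ≥ ε(μ + (1-t)Δ) = t(1-t)Δ μ/2 + ...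
    have h1t : 0 < 1 - t := by linarith
    have hΔμ : Δ ^ 2 = Δ * μ / 2 := by rw [hΔ]; ring
    nlinarith [mul_pos (mul_pos ht0 h1t) hΔpos, mul_pos hεpos hΔpos]
  have hkey := key_ge hf ha hx ht0 ht1 hεpos h1 h2
  refine ⟨t * Δ - ε, by linarith, ?_⟩
  have harg : (fun i => x i + (t * Δ - ε)) = fun i => t * a i + (1 - t) * x i - ε := by
    funext i; simp only [ha']; ring
  rw [harg]
  refine le_trans hkey ?_
  -- t f(a) + (1-t) f(x) = f x + t (f a - f x) ≤ f x + t M ≤ f x + η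
  have hfa : f a - f x ≤ M := by
    rw [hM, ha']
    exact le_abs_self _
  have htM : t ≤ η / (M + 1) := min_le_right _ _
  have : t * (f a - f x) ≤ η := by
    calc t * (f a - f x) ≤ t * M := by nlinarith
    _ ≤ (η / (M + 1)) * M := by nlinarith
    _ ≤ η := by
        rw [div_mul_eq_mul_div, div_le_iff₀ (by linarith)]
        nlinarith
  linarith

/-- a globally operator monotone `f : (0,∞)^k → (0,∞)` is concave
on `(0,∞)^k`, and hence continuous there. -/
theorem stmt4 (k : ℕ) (f : (Fin k → ℝ) → ℝ) (hf : GloballyOpMonotone k f) :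
    (∀ a b : Fin k → ℝ, (∀ i, 0 < a i) → (∀ i, 0 < b i) →
      ∀ t : ℝ, 0 ≤ t → t ≤ 1 →
        t * f a + (1 - t) * f b ≤ f (fun i => t * a i + (1 - t) * b i)) ∧
    ContinuousOn f {x | ∀ i, 0 < x i} := by
  have part1 : ∀ a b : Fin k → ℝ, (∀ i, 0 < a i) → (∀ i, 0 < b i) →
      ∀ t : ℝ, 0 ≤ t → t ≤ 1 →
        t * f a + (1 - t) * f b ≤ f (fun i => t * a i + (1 - t) * b i) := by
    intro a b ha hb t ht0 ht1
    rcases eq_or_lt_of_le ht0 with h0 | h0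
    · have e : (fun i => t * a i + (1 - t) * b i) = b := by
        funext i; rw [← h0]; ring
      rw [e, ← h0]
      exact le_of_eq (by ring)
    rcases eq_or_lt_of_le ht1 with h1 | h1
    · have e : (fun i => t * a i + (1 - t) * b i) = a := by
        funext i; rw [h1]; ring
      rw [e, h1]
      exact le_of_eq (by ring)
    rcases Nat.eq_zero_or_pos k with hk | hk
    · subst hk
      have eb : b = a := funext fun i => i.elim0
      have e : (fun i : Fin 0 => t * a i + (1 - t) * b i) = a := funext fun i => i.elim0
      rw [e, eb]
      exact le_of_eq (by ring)
    · haveI : Nonempty (Fin k) := ⟨⟨0, hk⟩⟩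
      set m : Fin k → ℝ := fun i => t * a i + (1 - t) * b i with hm
      have hmpos : ∀ i, 0 < m i := fun i => by
        have := ha i; have := hb i
        simp only [hm]; nlinarith
      refine le_of_forall_pos_le_add ?_
      intro η hη
      obtain ⟨δ, hδ, hle⟩ := right_cont hf hmpos hη
      have hkey := key_le hf ha hb h0 h1 hδ
      calc t * f a + (1 - t) * f b ≤ f (fun i => t * a i + (1 - t) * b i + δ) := hkey
        _ = f (fun i => m i + δ) := by rfl
        _ ≤ f m + η := hle
  refine ⟨part1, ?_⟩
  have hset : {x : Fin k → ℝ | ∀ i, 0 < x i}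
      = Set.pi Set.univ (fun _ => Set.Ioi (0:ℝ)) := by
    ext x; simp [Set.mem_pi]
  have hopen : IsOpen {x : Fin k → ℝ | ∀ i, 0 < x i} := by
    rw [hset]
    exact isOpen_set_pi Set.finite_univ (fun i _ => isOpen_Ioi)
  have hconc : ConcaveOn ℝ {x : Fin k → ℝ | ∀ i, 0 < x i} f := by
    constructor
    · rw [hset]
      exact convex_pi (fun i _ => convex_Ioi 0)
    · intro x hx y hy p q hp hq hpq
      have hq' : q = 1 - p := by linarith
      have := part1 x y hx hy p hp (by linarith)
      have e : (p • x + q • y) = fun i => p * x i + (1 - p) * y i := by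
        funext i; simp [hq', Pi.add_apply, smul_eq_mul]
      rw [e]
      simpa [smul_eq_mul, hq'] using this
  exact hconc.continuousOn hopen
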